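/- arXiv:1911.01768 — 2 statements merged into one kernel-verified Lean document; each statement's English description precedes it below -/
import Mathlib

section
/- For all real numbers y, z ≥ 0 and real p with p ≥ 1/2, the inequality |y^p - z^p - p·z^(p-1)·(y-z)| ≤ (p|p-1|/2)·(y^(p-2) + z^(p-2))·(y-z)² holds, where y, z > 0 when negative powers appear. -/
open Set

/-- Second-order Taylor with Lagrange remainder, explicit derivatives. -/
lemma taylor_aux (f f' f'' : ℝ → ℝ) (a b : ℝ) (hab : a < b)
    (hct : ∀ x ∈ Icc a b, ContDiffAt ℝ 1 f x)
    (hd1 : ∀ x ∈ Icc a b, HasDerivAt f (f' x) x)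
    (hd2 : ∀ x ∈ Icc a b, HasDerivAt f' (f'' x) x) :
    ∃ c ∈ Ioo a b, f b - f a - f' a * (b - a) = f'' c * (b - a) ^ 2 / 2 := by
  set s : Set ℝ := Icc a b with hs_def
  have hs : UniqueDiffOn ℝ s := uniqueDiffOn_Icc hab
  have hf : ContDiffOn ℝ 1 f s := fun x hx => (hct x hx).contDiffWithinAt
  have h1 : ∀ x ∈ s, iteratedDerivWithin 1 f s x = f' x := by
    intro x hx
    rw [iteratedDerivWithin_one]
    exact (hd1 x hx).hasDerivWithinAt.derivWithin (hs x hx)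
  have hf' : DifferentiableOn ℝ (iteratedDerivWithin 1 f s) (Ioo a b) := by
    intro x hx
    have hxs : x ∈ s := Ioo_subset_Icc_self hx
    have : DifferentiableWithinAt ℝ f' (Ioo a b) x :=
      (hd2 x hxs).differentiableAt.differentiableWithinAt
    exact this.congr (fun y hy => h1 y (Ioo_subset_Icc_self hy)) (h1 x hxs)
  obtain ⟨c, hc, H⟩ := taylor_mean_remainder_lagrange (f := f) (n := 1) hab.ne
    (by rw [uIcc_of_le hab.le]; exact hf) (by rw [uIcc_of_le hab.le, uIoo_of_le hab.le]; exact hf')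
  rw [uIoo_of_le hab.le] at hc
  rw [uIcc_of_le hab.le, ← hs_def] at H
  refine ⟨c, hc, ?_⟩
  have hcs : c ∈ s := Ioo_subset_Icc_self hc
  have has : a ∈ s := ⟨le_refl a, hab.le⟩
  have htay : taylorWithinEval f 1 s a b = f a + f' a * (b - a) := by
    rw [show (1:ℕ) = 0 + 1 from rfl, taylorWithinEval_succ, taylor_within_zero_eval,
      h1 a has]
    simp [smul_eq_mul]
    ring
  have hit2 : iteratedDerivWithin 2 f s c = f'' c := by
    rw [show (2:ℕ) = 1 + 1 from rfl, iteratedDerivWithin_succ,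
      derivWithin_congr h1 (h1 c hcs)]
    exact (hd2 c hcs).hasDerivWithinAt.derivWithin (hs c hcs)
  rw [htay, hit2] at H
  rw [show f b - (f a + f' a * (b - a)) = f b - f a - f' a * (b - a) from by ring] at H
  rw [H]
  norm_num [Nat.factorial]

lemma rpow_hasDerivAt {x p : ℝ} (hx : 0 < x) :
    HasDerivAt (fun t : ℝ => t ^ p) (p * x ^ (p - 1)) x :=
  Real.hasDerivAt_rpow_const (Or.inl hx.ne')

/-- Key lemma: Taylor expansion of rpow at the left endpoint. -/
lemma key_left (a b p : ℝ) (ha : 0 < a) (hab : a < b) :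
    ∃ c ∈ Ioo a b,
      b ^ p - a ^ p - p * a ^ (p - 1) * (b - a) = p * (p - 1) * c ^ (p - 2) * (b - a) ^ 2 / 2 := by
  have hpos : ∀ x ∈ Icc a b, (0:ℝ) < x := fun x hx => lt_of_lt_of_le ha hx.1
  obtain ⟨c, hc, H⟩ := taylor_aux (fun t => t ^ p) (fun t => p * t ^ (p - 1))
      (fun t => p * ((p - 1) * t ^ (p - 2))) a b hab
      (fun x hx => Real.contDiffAt_rpow_const_of_ne (hpos x hx).ne')
      (fun x hx => rpow_hasDerivAt (hpos x hx))
      (fun x hx => by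
        have := (rpow_hasDerivAt (p := p - 1) (hpos x hx)).const_mul p
        simpa [show p - 1 - 1 = p - 2 from by ring] using this)
  exact ⟨c, hc, by rw [H]; ring⟩

/-- Key lemma: Taylor expansion of rpow at the right endpoint. -/
lemma key_right (a b p : ℝ) (ha : 0 < a) (hab : a < b) :
    ∃ c ∈ Ioo a b,
      a ^ p - b ^ p - p * b ^ (p - 1) * (a - b) = p * (p - 1) * c ^ (p - 2) * (a - b) ^ 2 / 2 := by
  have hpos : ∀ x ∈ Icc a b, (0:ℝ) < x := fun x hx => lt_of_lt_of_le ha hx.1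
  have hmem : ∀ x ∈ Icc a b, a + b - x ∈ Icc a b := by
    intro x hx
    exact ⟨by linarith [hx.2], by linarith [hx.1]⟩
  have haff : ∀ x : ℝ, HasDerivAt (fun t : ℝ => a + b - t) (-1) x := by
    intro x
    simpa using (hasDerivAt_id x).const_sub (a + b)
  obtain ⟨c, hc, H⟩ := taylor_aux (fun t => (a + b - t) ^ p)
      (fun t => -(p * (a + b - t) ^ (p - 1)))
      (fun t => p * ((p - 1) * (a + b - t) ^ (p - 2))) a b hab
      (fun x hx => by
        have h1 : ContDiffAt ℝ 1 (fun t : ℝ => t ^ p) (a + b - x) :=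
          Real.contDiffAt_rpow_const_of_ne (hpos _ (hmem x hx)).ne'
        exact h1.comp x ((contDiffAt_const.sub contDiffAt_id)))
      (fun x hx => by
        have := (rpow_hasDerivAt (p := p) (hpos _ (hmem x hx))).comp x (haff x)
        simpa [mul_comm, Function.comp_def] using this)
      (fun x hx => by
        have h1 := ((rpow_hasDerivAt (p := p - 1) (hpos _ (hmem x hx))).comp x (haff x)).const_mul p
        have h2 := h1.neg
        simpa [show p - 1 - 1 = p - 2 from by ring, mul_comm, mul_assoc, mul_left_comm, Pi.neg_def] using h2)
  refine ⟨a + b - c, ⟨by linarith [hc.2], by linarith [hc.1]⟩, ?_⟩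
  have : (a + b - b) = a := by ring
  rw [this] at H
  have h2 : a ^ p - (a + b - a) ^ p - -(p * (a + b - a) ^ (p - 1)) * (b - a)
      = a ^ p - b ^ p - p * b ^ (p - 1) * (a - b) := by
    rw [show a + b - a = b from by ring]; ring
  rw [h2] at H
  rw [H]; ring

theorem taylor_second_order_rpow (y z p : ℝ) (hy : 0 < y) (hz : 0 < z) (hp : 1 / 2 ≤ p) :
    |y ^ p - z ^ p - p * z ^ (p - 1) * (y - z)| ≤
      (p * |p - 1| / 2) * (y ^ (p - 2) + z ^ (p - 2)) * (y - z) ^ 2 := by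
  have hp0 : 0 ≤ p := by linarith
  -- bound for c between y and z
  have hbound : ∀ c : ℝ, 0 < c → (c ≤ y ∨ c ≤ z) → (y ≤ c ∨ z ≤ c) →
      c ^ (p - 2) ≤ y ^ (p - 2) + z ^ (p - 2) := by
    intro c hc hle hge
    have hy' : (0:ℝ) ≤ y ^ (p - 2) := Real.rpow_nonneg hy.le _
    have hz' : (0:ℝ) ≤ z ^ (p - 2) := Real.rpow_nonneg hz.le _
    rcases le_or_gt 0 (p - 2) with he | he
    · rcases hle with h | h
      · calc c ^ (p - 2) ≤ y ^ (p - 2) := Real.rpow_le_rpow hc.le h he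
          _ ≤ _ := by linarith
      · calc c ^ (p - 2) ≤ z ^ (p - 2) := Real.rpow_le_rpow hc.le h he
          _ ≤ _ := by linarith
    · rcases hge with h | h
      · calc c ^ (p - 2) ≤ y ^ (p - 2) := Real.rpow_le_rpow_of_nonpos hy h he.le
          _ ≤ _ := by linarith
      · calc c ^ (p - 2) ≤ z ^ (p - 2) := Real.rpow_le_rpow_of_nonpos hz h he.le
          _ ≤ _ := by linarith
  rcases lt_trichotomy y z with hyz | hyz | hyz
  · obtain ⟨c, hc, H⟩ := key_right y z p hy hyz
    rw [H, abs_div, abs_mul, abs_mul, abs_mul, abs_of_nonneg hp0, abs_of_nonneg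
      (Real.rpow_nonneg (hy.trans hc.1).le _), abs_of_nonneg (sq_nonneg (y - z)), abs_of_pos (by norm_num : (0:ℝ) < 2)]
    have hb := hbound c (hy.trans hc.1) (Or.inr hc.2.le) (Or.inl hc.1.le)
    have hsq : (0:ℝ) ≤ (y - z) ^ 2 := sq_nonneg _
    have habs : (0:ℝ) ≤ p * |p - 1| := mul_nonneg hp0 (abs_nonneg _)
    calc p * |p - 1| * c ^ (p - 2) * (y - z) ^ 2 / 2
        ≤ p * |p - 1| * (y ^ (p - 2) + z ^ (p - 2)) * (y - z) ^ 2 / 2 := by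
          apply div_le_div_of_nonneg_right ?_ (by norm_num)
          exact mul_le_mul_of_nonneg_right (mul_le_mul_of_nonneg_left hb habs) hsq
      _ = (p * |p - 1| / 2) * (y ^ (p - 2) + z ^ (p - 2)) * (y - z) ^ 2 := by ring
  · simp [hyz]
  · obtain ⟨c, hc, H⟩ := key_left z y p hz hyz
    rw [H, abs_div, abs_mul, abs_mul, abs_mul, abs_of_nonneg hp0, abs_of_nonneg
      (Real.rpow_nonneg (hz.trans hc.1).le _), abs_of_nonneg (sq_nonneg (y - z)), abs_of_pos (by norm_num : (0:ℝ) < 2)]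
    have hb := hbound c (hz.trans hc.1) (Or.inl hc.2.le) (Or.inr hc.1.le)
    have hsq : (0:ℝ) ≤ (y - z) ^ 2 := sq_nonneg _
    have habs : (0:ℝ) ≤ p * |p - 1| := mul_nonneg hp0 (abs_nonneg _)
    calc p * |p - 1| * c ^ (p - 2) * (y - z) ^ 2 / 2
        ≤ p * |p - 1| * (y ^ (p - 2) + z ^ (p - 2)) * (y - z) ^ 2 / 2 := by
          apply div_le_div_of_nonneg_right ?_ (by norm_num)
          exact mul_le_mul_of_nonneg_right (mul_le_mul_of_nonneg_left hb habs) hsq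
      _ = (p * |p - 1| / 2) * (y ^ (p - 2) + z ^ (p - 2)) * (y - z) ^ 2 := by ring
end

section
/- Let θ ≥ 1 and let ν be a Lévy measure on ℝ^d \ {0} (i.e. ∫ (1 ∧ |x|²) ν(dx) < ∞). Let ν_Z(A) = ∫_{(0,∞)} ∫_{ℝ^d} 1_A(x) (2πs)^{-d/2} e^{-|x|²/(2s)} dx ν_S(ds) be the Lévy measure of a subordinate Brownian motion with subordinator Lévy measure ν_S. Then ∫_{|x| ≥ 1} |x|^θ ν_Z(dx) < ∞ if and only if ∫_{(1,∞)} s^{θ/2} ν_S(ds) < ∞. -/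
open MeasureTheory Real Set

lemma aux_rpow_le_exp (α : ℝ) (hα : 0 ≤ α) :
    ∃ K : ℝ, 1 ≤ K ∧ ∀ t : ℝ, 0 ≤ t → t ^ α ≤ K * Real.exp t := by
  refine ⟨(Nat.ceil α).factorial, by exact_mod_cast Nat.one_le_iff_ne_zero.mpr (Nat.factorial_ne_zero _), ?_⟩
  intro t ht
  have hK : (1:ℝ) ≤ (Nat.ceil α).factorial := by
    exact_mod_cast Nat.one_le_iff_ne_zero.mpr (Nat.factorial_ne_zero _)
  rcases le_or_gt t 1 with h1 | h1
  · have h2 : t ^ α ≤ 1 := Real.rpow_le_one ht h1 hα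
    have h3 : (1:ℝ) ≤ Real.exp t := Real.one_le_exp ht
    nlinarith
  · have h2 : t ^ α ≤ t ^ ((Nat.ceil α : ℕ) : ℝ) :=
      Real.rpow_le_rpow_of_exponent_le h1.le (Nat.le_ceil α)
    rw [Real.rpow_natCast] at h2
    have h3 : t ^ (Nat.ceil α) / (Nat.ceil α).factorial ≤ Real.exp t :=
      Real.pow_div_factorial_le_exp t (by linarith) (Nat.ceil α)
    have h4 : (0:ℝ) < (Nat.ceil α).factorial := by positivity
    calc t ^ α ≤ t ^ (Nat.ceil α) := h2
      _ ≤ (Nat.ceil α).factorial * Real.exp t := by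
          rw [div_le_iff₀ h4] at h3; linarith

lemma aux_integrable_gauss (d : ℕ) (b : ℝ) (hb : 0 < b) :
    Integrable (fun x : EuclideanSpace ℝ (Fin d) => Real.exp (-b * ‖x‖^2)) := by
  have h := (GaussianFourier.integrable_cexp_neg_mul_sq_norm_add
      (b := (b:ℂ)) (by simpa using hb) 0 (0 : EuclideanSpace ℝ (Fin d))).norm
  simpa [Complex.norm_exp, ← Complex.ofReal_pow] using h

lemma aux_lint_gauss (d : ℕ) {b c : ℝ} (hb : 0 < b) (hc : 0 ≤ c)
    (S : Set (EuclideanSpace ℝ (Fin d))) :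
    ∫⁻ x in S, ENNReal.ofReal (c * Real.exp (-b * ‖x‖^2)) ∂volume
      ≤ ENNReal.ofReal (c * (π / b) ^ ((d:ℝ) / 2)) := by
  have hInt : Integrable (fun x : EuclideanSpace ℝ (Fin d) => c * Real.exp (-b * ‖x‖^2)) :=
    (aux_integrable_gauss d b hb).const_mul c
  calc ∫⁻ x in S, ENNReal.ofReal (c * Real.exp (-b * ‖x‖^2)) ∂volume
      ≤ ∫⁻ x, ENNReal.ofReal (c * Real.exp (-b * ‖x‖^2)) ∂volume :=
        setLIntegral_le_lintegral _ _
    _ = ENNReal.ofReal (∫ x, c * Real.exp (-b * ‖x‖^2) ∂volume) :=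
        (MeasureTheory.ofReal_integral_eq_lintegral_ofReal hInt
          (Filter.Eventually.of_forall fun x => by positivity)).symm
    _ = ENNReal.ofReal (c * (π / b) ^ ((d:ℝ)/2)) := by
        rw [integral_const_mul, GaussianFourier.integral_rexp_neg_mul_sq_norm hb,
          finrank_euclideanSpace_fin]

lemma aux_bound_B (d : ℕ) (θ : ℝ) (hθ : 1 ≤ θ) :
    ∃ C : ℝ, 0 ≤ C ∧ ∀ s : ℝ, 0 < s →
      (∫⁻ x in {x : EuclideanSpace ℝ (Fin d) | 1 ≤ ‖x‖},
          ENNReal.ofReal (‖x‖ ^ θ * (2 * π * s) ^ (-(d : ℝ) / 2)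
            * Real.exp (-‖x‖ ^ 2 / (2 * s))) ∂volume)
        ≤ ENNReal.ofReal (C * s ^ (θ / 2)) := by
  obtain ⟨K, hK1, hK⟩ := aux_rpow_le_exp (θ/2) (by linarith)
  set a : ℝ := (d:ℝ)/2 with ha
  refine ⟨4 ^ (θ/2) * K * 2 ^ a, by positivity, fun s hs => ?_⟩
  set c : ℝ := (4*s) ^ (θ/2) * K * (2*π*s) ^ (-a) with hc
  have hc0 : 0 ≤ c := by positivity
  have hb : (0:ℝ) < 1/(4*s) := by positivity
  have hpt : ∀ x : EuclideanSpace ℝ (Fin d),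
      ‖x‖ ^ θ * (2 * π * s) ^ (-(d : ℝ) / 2) * Real.exp (-‖x‖ ^ 2 / (2 * s))
        ≤ c * Real.exp (-(1/(4*s)) * ‖x‖^2) := by
    intro x
    have hn : (0:ℝ) ≤ ‖x‖ := norm_nonneg x
    have e1 : (‖x‖^2 : ℝ) ^ (θ/2) = ‖x‖ ^ θ := by
      rw [← Real.rpow_natCast ‖x‖ 2, ← Real.rpow_mul hn]
      congr 1
      ring
    have e3 : ‖x‖ ^ θ ≤ (4*s) ^ (θ/2) * K * Real.exp (‖x‖^2/(4*s)) := by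
      have h0 := hK (‖x‖^2/(4*s)) (by positivity)
      have h1 : ‖x‖ ^ θ = (4*s)^(θ/2) * (‖x‖^2/(4*s)) ^ (θ/2) := by
        rw [← Real.mul_rpow (by positivity) (by positivity), ← e1]
        congr 1
        field_simp
      rw [h1]
      calc (4*s)^(θ/2) * (‖x‖^2/(4*s)) ^ (θ/2)
          ≤ (4*s)^(θ/2) * (K * Real.exp (‖x‖^2/(4*s))) :=
            mul_le_mul_of_nonneg_left h0 (by positivity)
        _ = (4*s) ^ (θ/2) * K * Real.exp (‖x‖^2/(4*s)) := by ring
    have e4 : Real.exp (‖x‖^2/(4*s)) * Real.exp (-‖x‖ ^ 2 / (2 * s))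
        = Real.exp (-(1/(4*s)) * ‖x‖^2) := by
      rw [← Real.exp_add]
      congr 1
      field_simp
      ring
    have h5 : (0:ℝ) ≤ (2 * π * s) ^ (-(d : ℝ) / 2) := by positivity
    have h6 : (0:ℝ) ≤ Real.exp (-‖x‖ ^ 2 / (2 * s)) := (Real.exp_pos _).le
    calc ‖x‖ ^ θ * (2 * π * s) ^ (-(d : ℝ) / 2) * Real.exp (-‖x‖ ^ 2 / (2 * s))
        ≤ ((4*s) ^ (θ/2) * K * Real.exp (‖x‖^2/(4*s))) * (2 * π * s) ^ (-(d : ℝ) / 2)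
            * Real.exp (-‖x‖ ^ 2 / (2 * s)) := by
          apply mul_le_mul_of_nonneg_right (mul_le_mul_of_nonneg_right e3 h5) h6
      _ = c * (Real.exp (‖x‖^2/(4*s)) * Real.exp (-‖x‖ ^ 2 / (2 * s))) := by
          rw [hc, show -a = -(d:ℝ)/2 by rw [ha]; ring]; ring_nf
      _ = c * Real.exp (-(1/(4*s)) * ‖x‖^2) := by rw [e4]
  calc (∫⁻ x in {x : EuclideanSpace ℝ (Fin d) | 1 ≤ ‖x‖},
          ENNReal.ofReal (‖x‖ ^ θ * (2 * π * s) ^ (-(d : ℝ) / 2)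
            * Real.exp (-‖x‖ ^ 2 / (2 * s))) ∂volume)
      ≤ ∫⁻ x in {x : EuclideanSpace ℝ (Fin d) | 1 ≤ ‖x‖},
          ENNReal.ofReal (c * Real.exp (-(1/(4*s)) * ‖x‖^2)) ∂volume :=
        lintegral_mono fun x => ENNReal.ofReal_le_ofReal (hpt x)
    _ ≤ ENNReal.ofReal (c * (π / (1/(4*s))) ^ a) := aux_lint_gauss d hb hc0 _
    _ = ENNReal.ofReal ((4 ^ (θ/2) * K * 2 ^ a) * s ^ (θ/2)) := by
        congr 1
        have h1 : π / (1/(4*s)) = 2 * (2*π*s) := by field_simp; ring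
        have h2 : (2*(2*π*s))^a = 2^a * (2*π*s)^a :=
          Real.mul_rpow (by norm_num) (by positivity)
        have h3 : (4*s)^(θ/2) = 4^(θ/2) * s^(θ/2) :=
          Real.mul_rpow (by norm_num) hs.le
        have h4 : (2*π*s)^(-a) * (2*π*s)^a = 1 := by
          rw [← Real.rpow_add (by positivity)]; simp
        rw [hc, h1, h2, h3]
        calc 4^(θ/2) * s^(θ/2) * K * (2*π*s)^(-a) * (2^a * (2*π*s)^a)
            = (4^(θ/2) * s^(θ/2) * K * 2^a) * ((2*π*s)^(-a) * (2*π*s)^a) := by ring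
          _ = (4 ^ (θ/2) * K * 2 ^ a) * s ^ (θ/2) := by rw [h4]; ring

lemma aux_norm_rpow_bound {θ K : ℝ} (hθ : 0 ≤ θ)
    (hK : ∀ t : ℝ, 0 ≤ t → t ^ (θ/2) ≤ K * Real.exp t)
    {m : ℝ} (r : ℝ) (hm : 0 < m) (hr : 0 ≤ r) :
    r ^ θ ≤ m ^ (θ/2) * K * Real.exp (r^2/m) := by
  have h0 := hK (r^2/m) (by positivity)
  have h1 : r ^ θ = m^(θ/2) * (r^2/m) ^ (θ/2) := by
    rw [← Real.mul_rpow hm.le (by positivity)]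
    rw [mul_div_cancel₀ _ (ne_of_gt hm)]
    rw [← Real.rpow_natCast r 2, ← Real.rpow_mul hr]
    congr 1
    ring
  rw [h1]
  calc m^(θ/2) * (r^2/m) ^ (θ/2) ≤ m^(θ/2) * (K * Real.exp (r^2/m)) :=
        mul_le_mul_of_nonneg_left h0 (by positivity)
    _ = m ^ (θ/2) * K * Real.exp (r^2/m) := by ring

lemma aux_bound_A (d : ℕ) (θ : ℝ) (hθ : 1 ≤ θ) :
    ∃ C : ℝ, 0 ≤ C ∧ ∀ s : ℝ, 0 < s → s ≤ 1 →
      (∫⁻ x in {x : EuclideanSpace ℝ (Fin d) | 1 ≤ ‖x‖},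
          ENNReal.ofReal (‖x‖ ^ θ * (2 * π * s) ^ (-(d : ℝ) / 2)
            * Real.exp (-‖x‖ ^ 2 / (2 * s))) ∂volume)
        ≤ ENNReal.ofReal (C * s) := by
  obtain ⟨K, hK1, hK⟩ := aux_rpow_le_exp (θ/2) (by linarith)
  set a : ℝ := (d:ℝ)/2 with ha
  obtain ⟨K', hK'1, hK'⟩ := aux_rpow_le_exp (a+1) (by positivity)
  set C' : ℝ := 8^(θ/2) * K * ((2*π)^(-a) * K' * 4^(a+1)) with hC'
  have hC'0 : 0 < C' := by positivity
  refine ⟨C' * (π/(1/8))^a, by positivity, fun s hs hs1 => ?_⟩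
  have hpt : ∀ x : EuclideanSpace ℝ (Fin d), 1 ≤ ‖x‖ →
      ‖x‖ ^ θ * (2 * π * s) ^ (-(d : ℝ) / 2) * Real.exp (-‖x‖ ^ 2 / (2 * s))
        ≤ (C' * s) * Real.exp (-(1/8) * ‖x‖^2) := by
    intro x hx
    have hr : (0:ℝ) ≤ ‖x‖ := norm_nonneg x
    have hr2 : (1:ℝ) ≤ ‖x‖^2 := by nlinarith
    -- step i
    have hi : Real.exp (-‖x‖^2/(2*s)) ≤ Real.exp (-(1/(4*s))) * Real.exp (-‖x‖^2/4) := by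
      rw [← Real.exp_add]
      apply Real.exp_le_exp.mpr
      have hnum : (0:ℝ) ≤ 2*‖x‖^2 - 1 - s*‖x‖^2 := by nlinarith
      have heq : (-(1/(4*s)) + -‖x‖^2/4) - (-‖x‖^2/(2*s))
          = (2*‖x‖^2 - 1 - s*‖x‖^2)/(4*s) := by field_simp; ring
      have : (0:ℝ) ≤ (2*‖x‖^2 - 1 - s*‖x‖^2)/(4*s) := by positivity
      linarith [heq ▸ this]
    -- step ii
    have hii : ‖x‖ ^ θ ≤ 8^(θ/2) * K * Real.exp (‖x‖^2/8) :=
      aux_norm_rpow_bound (by linarith) hK ‖x‖ (by norm_num) hr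
    -- step iv
    have hE : Real.exp (-(1/(4*s))) ≤ K' * (4*s)^(a+1) := by
      have h0 := hK' (1/(4*s)) (by positivity)
      rw [one_div, Real.inv_rpow (by positivity)] at h0
      have hP : (0:ℝ) < (4*s)^(a+1) := by positivity
      have hQ : (0:ℝ) < Real.exp ((4*s)⁻¹) := Real.exp_pos _
      have hgoal : Real.exp (-(1/(4*s))) = (Real.exp ((4*s)⁻¹))⁻¹ := by
        rw [← Real.exp_neg]; congr 1; rw [one_div]
      rw [hgoal]
      nlinarith [mul_inv_cancel₀ (ne_of_gt hP), mul_inv_cancel₀ (ne_of_gt hQ),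
        mul_pos hP (inv_pos.mpr hQ), mul_le_mul_of_nonneg_left h0
          (le_of_lt (mul_pos hP (inv_pos.mpr hQ)))]
    have hiv : (2*π*s) ^ (-(d:ℝ)/2) * Real.exp (-(1/(4*s)))
        ≤ (2*π)^(-a) * K' * 4^(a+1) * s := by
      have hsplit : (2*π*s) ^ (-(d:ℝ)/2) = (2*π)^(-a) * s^(-a) := by
        rw [show (-(d:ℝ)/2) = -a by rw [ha]; ring, Real.mul_rpow (by positivity) hs.le]
      have h4s : (4*s)^(a+1) = 4^(a+1) * s^(a+1) :=
        Real.mul_rpow (by norm_num) hs.le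
      have hss : s^(-a) * s^(a+1) = s := by
        rw [← Real.rpow_add hs]
        norm_num
      calc (2*π*s) ^ (-(d:ℝ)/2) * Real.exp (-(1/(4*s)))
          ≤ (2*π)^(-a) * s^(-a) * (K' * (4^(a+1) * s^(a+1))) := by
            rw [hsplit, ← h4s]
            exact mul_le_mul_of_nonneg_left hE (by positivity)
        _ = (2*π)^(-a) * K' * 4^(a+1) * (s^(-a) * s^(a+1)) := by ring
        _ = (2*π)^(-a) * K' * 4^(a+1) * s := by rw [hss]
    -- combine
    have hexp8 : Real.exp (‖x‖^2/8) * Real.exp (-‖x‖^2/4) = Real.exp (-(1/8) * ‖x‖^2) := by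
      rw [← Real.exp_add]; congr 1; ring
    calc ‖x‖ ^ θ * (2 * π * s) ^ (-(d : ℝ) / 2) * Real.exp (-‖x‖ ^ 2 / (2 * s))
        ≤ ‖x‖ ^ θ * (2 * π * s) ^ (-(d : ℝ) / 2)
            * (Real.exp (-(1/(4*s))) * Real.exp (-‖x‖^2/4)) := by
          exact mul_le_mul_of_nonneg_left hi (by positivity)
      _ = ((2*π*s) ^ (-(d:ℝ)/2) * Real.exp (-(1/(4*s)))) * ‖x‖ ^ θ
            * Real.exp (-‖x‖^2/4) := by ring
      _ ≤ ((2*π)^(-a) * K' * 4^(a+1) * s) * (8^(θ/2) * K * Real.exp (‖x‖^2/8))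
            * Real.exp (-‖x‖^2/4) := by
          apply mul_le_mul_of_nonneg_right _ (by positivity)
          apply mul_le_mul hiv hii (by positivity) (by positivity)
      _ = (C' * s) * (Real.exp (‖x‖^2/8) * Real.exp (-‖x‖^2/4)) := by rw [hC']; ring
      _ = (C' * s) * Real.exp (-(1/8) * ‖x‖^2) := by rw [hexp8]
  have hmeas : MeasurableSet {x : EuclideanSpace ℝ (Fin d) | 1 ≤ ‖x‖} :=
    (isClosed_le continuous_const continuous_norm).measurableSet
  calc (∫⁻ x in {x : EuclideanSpace ℝ (Fin d) | 1 ≤ ‖x‖},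
          ENNReal.ofReal (‖x‖ ^ θ * (2 * π * s) ^ (-(d : ℝ) / 2)
            * Real.exp (-‖x‖ ^ 2 / (2 * s))) ∂volume)
      ≤ ∫⁻ x in {x : EuclideanSpace ℝ (Fin d) | 1 ≤ ‖x‖},
          ENNReal.ofReal ((C' * s) * Real.exp (-(1/8) * ‖x‖^2)) ∂volume := by
        apply setLIntegral_mono' hmeas
        intro x hx
        exact ENNReal.ofReal_le_ofReal (hpt x hx)
    _ ≤ ENNReal.ofReal ((C' * s) * (π/(1/8))^a) :=
        aux_lint_gauss d (by norm_num) (by positivity) _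
    _ = ENNReal.ofReal ((C' * (π/(1/8))^a) * s) := by ring_nf

lemma aux_bound_C (d : ℕ) (hd : 0 < d) (θ : ℝ) (hθ : 1 ≤ θ) :
    ∃ c₀ : ℝ, 0 < c₀ ∧ ∀ s : ℝ, 1 ≤ s →
      ENNReal.ofReal (c₀ * s ^ (θ/2)) * volume (Metric.ball (0 : EuclideanSpace ℝ (Fin d)) 1)
        ≤ (∫⁻ x in {x : EuclideanSpace ℝ (Fin d) | 1 ≤ ‖x‖},
          ENNReal.ofReal (‖x‖ ^ θ * (2 * π * s) ^ (-(d : ℝ) / 2)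
            * Real.exp (-‖x‖ ^ 2 / (2 * s))) ∂volume) := by
  haveI : Nontrivial (EuclideanSpace ℝ (Fin d)) :=
    Module.nontrivial_of_finrank_pos (R := ℝ) (by rw [finrank_euclideanSpace_fin]; exact hd)
  set a : ℝ := (d:ℝ)/2 with ha
  have h2d : (1:ℝ) ≤ 2^d := one_le_pow₀ (by norm_num)
  refine ⟨Real.exp (-2) * (2*π)^(-a) * (2^d - 1), by
    have : (1:ℝ) < 2^d := one_lt_pow₀ (by norm_num) (by omega)
    have h1 : (0:ℝ) < Real.exp (-2) := Real.exp_pos _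
    have h2 : (0:ℝ) < (2*π)^(-a) := by positivity
    have h3 : (0:ℝ) < 2^d - 1 := by
      have : (1:ℝ) < 2^d := one_lt_pow₀ (by norm_num) (by omega)
      linarith
    exact mul_pos (mul_pos h1 h2) h3, fun s hs => ?_⟩
  have hs0 : (0:ℝ) < s := lt_of_lt_of_le one_pos hs
  set r : ℝ := Real.sqrt s with hrdef
  have hr0 : 0 < r := Real.sqrt_pos.mpr hs0
  have hr1 : 1 ≤ r := by
    rw [hrdef, show (1:ℝ) = Real.sqrt 1 by simp]
    exact Real.sqrt_le_sqrt hs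
  have hr2 : r^2 = s := Real.sq_sqrt hs0.le
  set Ann : Set (EuclideanSpace ℝ (Fin d)) :=
    Metric.closedBall 0 (2*r) \ Metric.ball 0 r with hAnn
  have hAnnMeas : MeasurableSet Ann :=
    Metric.isClosed_closedBall.measurableSet.diff Metric.isOpen_ball.measurableSet
  have hAnnSub : Ann ⊆ {x : EuclideanSpace ℝ (Fin d) | 1 ≤ ‖x‖} := by
    rintro x ⟨-, hx2⟩
    rw [Metric.mem_ball, dist_zero_right, not_lt] at hx2
    exact le_trans hr1 hx2
  -- pointwise lower bound on annulus
  have hrθ : r ^ θ = s ^ (θ/2) := by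
    rw [hrdef, Real.sqrt_eq_rpow, ← Real.rpow_mul hs0.le]
    congr 1
    ring
  have hrd : (r:ℝ) ^ (d:ℕ) = s ^ a := by
    rw [← Real.rpow_natCast r d, hrdef, Real.sqrt_eq_rpow, ← Real.rpow_mul hs0.le, ha]
    congr 1
    ring
  set v : ℝ := s^(θ/2) * (2*π*s)^(-(d:ℝ)/2) * Real.exp (-2) with hv
  have hv0 : 0 ≤ v := by positivity
  have hpt : ∀ x ∈ Ann, ENNReal.ofReal v ≤
      ENNReal.ofReal (‖x‖ ^ θ * (2 * π * s) ^ (-(d : ℝ) / 2)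
        * Real.exp (-‖x‖ ^ 2 / (2 * s))) := by
    intro x hx
    obtain ⟨hx1, hx2⟩ := hx
    rw [Metric.mem_closedBall, dist_zero_right] at hx1
    rw [Metric.mem_ball, dist_zero_right, not_lt] at hx2
    apply ENNReal.ofReal_le_ofReal
    have h1 : s ^ (θ/2) ≤ ‖x‖ ^ θ := by
      rw [← hrθ]
      exact Real.rpow_le_rpow hr0.le hx2 (by linarith)
    have h2 : Real.exp (-2) ≤ Real.exp (-‖x‖ ^ 2 / (2 * s)) := by
      apply Real.exp_le_exp.mpr
      rw [neg_div, neg_le_neg_iff]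
      rw [div_le_iff₀ (by positivity)]
      nlinarith [hx1, hr2, norm_nonneg x]
    have hp : (0:ℝ) ≤ (2 * π * s) ^ (-(d : ℝ) / 2) := by positivity
    calc v = s^(θ/2) * (2*π*s)^(-(d:ℝ)/2) * Real.exp (-2) := hv
      _ ≤ ‖x‖ ^ θ * (2*π*s)^(-(d:ℝ)/2) * Real.exp (-‖x‖ ^ 2 / (2 * s)) := by
          apply mul_le_mul _ h2 (Real.exp_pos _).le (by positivity)
          exact mul_le_mul_of_nonneg_right h1 hp
  -- volume of annulus
  set μB : ENNReal := volume (Metric.ball (0 : EuclideanSpace ℝ (Fin d)) 1) with hμB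
  have hμBfin : μB ≠ ⊤ := (measure_ball_lt_top).ne
  have hvol : volume Ann = ENNReal.ofReal ((2^d - 1) * r^(d:ℕ)) * μB := by
    rw [hAnn, measure_diff (Metric.ball_subset_closedBall.trans
        (Metric.closedBall_subset_closedBall (by linarith)))
      Metric.isOpen_ball.measurableSet.nullMeasurableSet
      (measure_ball_lt_top).ne]
    rw [Measure.addHaar_closedBall _ _ (by positivity : (0:ℝ) ≤ 2*r),
      Measure.addHaar_ball _ _ hr0.le, finrank_euclideanSpace_fin]
    rw [← ENNReal.sub_mul (fun _ _ => hμBfin), ← ENNReal.ofReal_sub _ (by positivity)]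
    congr 2
    rw [mul_pow]
    ring
  calc ENNReal.ofReal ((Real.exp (-2) * (2*π)^(-a) * (2^d - 1)) * s ^ (θ/2)) * μB
      = ENNReal.ofReal v * (ENNReal.ofReal ((2^d - 1) * r^(d:ℕ)) * μB) := by
        rw [← mul_assoc, ← ENNReal.ofReal_mul hv0]
        congr 2
        rw [hv, hrd]
        have hsplit : (2*π*s) ^ (-(d:ℝ)/2) = (2*π)^(-a) * s^(-a) := by
          rw [show (-(d:ℝ)/2) = -a by rw [ha]; ring,
            Real.mul_rpow (by positivity) hs0.le]
        rw [hsplit]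
        symm
        have hss : s^(-a) * s^a = 1 := by
          rw [← Real.rpow_add hs0]; simp
        calc s^(θ/2) * ((2*π)^(-a) * s^(-a)) * Real.exp (-2) * ((2^d-1) * s^a)
            = Real.exp (-2) * (2*π)^(-a) * (2^d-1) * s^(θ/2) * (s^(-a) * s^a) := by ring
          _ = Real.exp (-2) * (2*π)^(-a) * (2^d-1) * (s^(θ/2)) := by rw [hss]; ring
      _ = ENNReal.ofReal v * volume Ann := by rw [hvol]
      _ = ∫⁻ _ in Ann, ENNReal.ofReal v ∂volume := (setLIntegral_const _ _).symm
      _ ≤ ∫⁻ x in Ann, ENNReal.ofReal (‖x‖ ^ θ * (2 * π * s) ^ (-(d : ℝ) / 2)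
            * Real.exp (-‖x‖ ^ 2 / (2 * s))) ∂volume := setLIntegral_mono' hAnnMeas hpt
      _ ≤ (∫⁻ x in {x : EuclideanSpace ℝ (Fin d) | 1 ≤ ‖x‖},
          ENNReal.ofReal (‖x‖ ^ θ * (2 * π * s) ^ (-(d : ℝ) / 2)
            * Real.exp (-‖x‖ ^ 2 / (2 * s))) ∂volume) := lintegral_mono_set hAnnSub

theorem subordinate_BM_moment_equivalence (d : ℕ) (hd : 0 < d) (θ : ℝ) (hθ : 1 ≤ θ)
    (νS : Measure ℝ)
    (hνS0 : νS (Set.Iic 0) = 0)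
    (hlevy : (∫⁻ s in Set.Ioi (0:ℝ), ENNReal.ofReal (min 1 s) ∂νS) < ⊤) :
    (∫⁻ s in Set.Ioi (0:ℝ),
        ∫⁻ x in {x : EuclideanSpace ℝ (Fin d) | 1 ≤ ‖x‖},
          ENNReal.ofReal (‖x‖ ^ θ * (2 * π * s) ^ (-(d : ℝ) / 2)
            * Real.exp (-‖x‖ ^ 2 / (2 * s))) ∂volume ∂νS) < ⊤
      ↔ (∫⁻ s in Set.Ioi (1:ℝ), ENNReal.ofReal (s ^ (θ / 2)) ∂νS) < ⊤ := by
  obtain ⟨CA, hCA0, hA⟩ := aux_bound_A d θ hθ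
  obtain ⟨CB, hCB0, hB⟩ := aux_bound_B d θ hθ
  obtain ⟨c₀, hc₀, hC⟩ := aux_bound_C d hd θ hθ
  set F : ℝ → ENNReal := fun s =>
    ∫⁻ x in {x : EuclideanSpace ℝ (Fin d) | 1 ≤ ‖x‖},
      ENNReal.ofReal (‖x‖ ^ θ * (2 * π * s) ^ (-(d : ℝ) / 2)
        * Real.exp (-‖x‖ ^ 2 / (2 * s))) ∂volume with hF
  set μB : ENNReal := volume (Metric.ball (0 : EuclideanSpace ℝ (Fin d)) 1) with hμB
  have hμB0 : μB ≠ 0 := (Metric.measure_ball_pos volume 0 one_pos).ne'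
  have hμBt : μB ≠ ⊤ := measure_ball_lt_top.ne
  constructor
  · intro hI
    set c : ENNReal := ENNReal.ofReal c₀ * μB with hc
    have hc0 : c ≠ 0 := by
      rw [hc]
      exact mul_ne_zero (by simp [ENNReal.ofReal_eq_zero, not_le, hc₀]) hμB0
    have hct : c ≠ ⊤ := ENNReal.mul_ne_top ENNReal.ofReal_ne_top hμBt
    have key : ∀ s ∈ Ioi (1:ℝ), ENNReal.ofReal (s^(θ/2)) ≤ c⁻¹ * F s := by
      intro s hs
      have h1 : c * ENNReal.ofReal (s^(θ/2)) ≤ F s := by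
        calc c * ENNReal.ofReal (s^(θ/2))
            = ENNReal.ofReal c₀ * ENNReal.ofReal (s^(θ/2)) * μB := by rw [hc]; ring
          _ = ENNReal.ofReal (c₀ * s^(θ/2)) * μB := by rw [ENNReal.ofReal_mul hc₀.le]
          _ ≤ F s := hC s (le_of_lt hs)
      calc ENNReal.ofReal (s^(θ/2)) = c⁻¹ * (c * ENNReal.ofReal (s^(θ/2))) := by
            rw [← mul_assoc, ENNReal.inv_mul_cancel hc0 hct, one_mul]
        _ ≤ c⁻¹ * F s := mul_le_mul_right h1 _
    calc ∫⁻ s in Ioi (1:ℝ), ENNReal.ofReal (s^(θ/2)) ∂νS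
        ≤ ∫⁻ s in Ioi (1:ℝ), c⁻¹ * F s ∂νS := setLIntegral_mono' measurableSet_Ioi key
      _ = c⁻¹ * ∫⁻ s in Ioi (1:ℝ), F s ∂νS :=
          lintegral_const_mul' _ _ (ENNReal.inv_ne_top.mpr hc0)
      _ ≤ c⁻¹ * ∫⁻ s in Ioi (0:ℝ), F s ∂νS :=
          mul_le_mul_right (lintegral_mono_set (Ioi_subset_Ioi (by norm_num))) _
      _ < ⊤ := ENNReal.mul_lt_top (ENNReal.inv_lt_top.mpr (pos_iff_ne_zero.mpr hc0)) hI
  · intro hJ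
    have hsplit : Ioi (0:ℝ) = Ioc 0 1 ∪ Ioi 1 := (Ioc_union_Ioi_eq_Ioi zero_le_one).symm
    rw [show (∫⁻ s in Set.Ioi (0:ℝ), F s ∂νS)
        = (∫⁻ s in Ioc (0:ℝ) 1, F s ∂νS) + (∫⁻ s in Ioi (1:ℝ), F s ∂νS) by
      rw [hsplit, lintegral_union measurableSet_Ioi (Ioc_disjoint_Ioi le_rfl)]]
    apply ENNReal.add_lt_top.mpr
    constructor
    · calc ∫⁻ s in Ioc (0:ℝ) 1, F s ∂νS
          ≤ ∫⁻ s in Ioc (0:ℝ) 1, ENNReal.ofReal (CA * s) ∂νS :=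
            setLIntegral_mono' measurableSet_Ioc (fun s hs => hA s hs.1 hs.2)
        _ = ∫⁻ s in Ioc (0:ℝ) 1, ENNReal.ofReal CA * ENNReal.ofReal (min 1 s) ∂νS := by
            apply setLIntegral_congr_fun measurableSet_Ioc
            intro s hs
            beta_reduce
            rw [ENNReal.ofReal_mul hCA0, min_eq_right hs.2]
        _ = ENNReal.ofReal CA * ∫⁻ s in Ioc (0:ℝ) 1, ENNReal.ofReal (min 1 s) ∂νS :=
            lintegral_const_mul' _ _ ENNReal.ofReal_ne_top
        _ ≤ ENNReal.ofReal CA * ∫⁻ s in Ioi (0:ℝ), ENNReal.ofReal (min 1 s) ∂νS :=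
            mul_le_mul_right (lintegral_mono_set Ioc_subset_Ioi_self) _
        _ < ⊤ := ENNReal.mul_lt_top ENNReal.ofReal_lt_top hlevy
    · calc ∫⁻ s in Ioi (1:ℝ), F s ∂νS
          ≤ ∫⁻ s in Ioi (1:ℝ), ENNReal.ofReal (CB * s^(θ/2)) ∂νS :=
            setLIntegral_mono' measurableSet_Ioi (fun s hs => hB s (lt_trans one_pos hs))
        _ = ∫⁻ s in Ioi (1:ℝ), ENNReal.ofReal CB * ENNReal.ofReal (s^(θ/2)) ∂νS := by
            simp_rw [ENNReal.ofReal_mul hCB0]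
        _ = ENNReal.ofReal CB * ∫⁻ s in Ioi (1:ℝ), ENNReal.ofReal (s^(θ/2)) ∂νS :=
            lintegral_const_mul' _ _ ENNReal.ofReal_ne_top
        _ < ⊤ := ENNReal.mul_lt_top ENNReal.ofReal_lt_top hJ
end
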